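/- Time shift property (H2): let g = (g_0, …, g_{N−1}) have entries in K with FFHT G, and fix an integer d. Define v by v_i := g_{(i−d) mod N} and let V be the FFHT of v. Then for every k, V_k = cos_k(d)·G_k + sin_k(d)·G_{(N−k) mod N}. -/

import Mathlib

open scoped BigOperators

/-- The finite field cosine: `cos_k(∠α^i) = (α^{ik} + α^{-ik})/2`,
where `α^{-ik}` denotes `(α⁻¹)^{ik}`. -/
noncomputable def fcos {K : Type*} [Field K] (α : Kˣ) (k i : ℤ) : K :=
  (((α ^ (i * k) : Kˣ) : K) + ((α⁻¹ ^ (i * k) : Kˣ) : K)) / 2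

/-- The finite field sine: `sin_k(∠α^i) = (α^{ik} - α^{-ik})/(2j)`. -/
noncomputable def fsin {K : Type*} [Field K] (α : Kˣ) (j : K) (k i : ℤ) : K :=
  (((α ^ (i * k) : Kˣ) : K) - ((α⁻¹ ^ (i * k) : Kˣ) : K)) / (2 * j)

/-- The finite field `cas` function: `cas_k(∠α^i) = cos_k(∠α^i) + sin_k(∠α^i)`. -/
noncomputable def fcas {K : Type*} [Field K] (α : Kˣ) (j : K) (k i : ℤ) : K :=
  fcos α k i + fsin α j k i

/-- The finite field Hartley transform of a vector `v` indexed by `ZMod N`: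
`V_k = ∑_{i=0}^{N-1} v_i · cas_k(∠α^i)`. -/
noncomputable def ffht {K : Type*} [Field K] (α : Kˣ) (j : K) {N : ℕ} [NeZero N]
    (v : ZMod N → K) (k : ZMod N) : K :=
  ∑ i : ZMod N, v i * fcas α j (k.val : ℤ) (i.val : ℤ)

lemma zpow_congr_mod {K : Type*} [Field K] (α : Kˣ) {N : ℕ} [NeZero N]
    (hα : orderOf α = N) {a b : ℤ} (h : ((a : ZMod N)) = (b : ZMod N)) :
    α ^ a = α ^ b := by
  have hd : (N : ℤ) ∣ a - b := by
    rwa [← ZMod.intCast_zmod_eq_zero_iff_dvd, Int.cast_sub, sub_eq_zero]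
  obtain ⟨c, hc⟩ := hd
  have h1 : α ^ (N : ℤ) = 1 := by
    rw [zpow_natCast, ← hα, pow_orderOf_eq_one]
  have : a = b + N * c := by linarith
  rw [this, zpow_add, zpow_mul, h1, one_zpow, mul_one]

lemma fcas_congr {K : Type*} [Field K] (α : Kˣ) (j : K) {N : ℕ} [NeZero N]
    (hα : orderOf α = N) {k k' a b : ℤ}
    (h : ((a * k : ℤ) : ZMod N) = ((b * k' : ℤ) : ZMod N)) :
    fcas α j k a = fcas α j k' b := by
  have h1 : α ^ (a * k) = α ^ (b * k') := zpow_congr_mod α hα h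
  have h2 : α⁻¹ ^ (a * k) = α⁻¹ ^ (b * k') := by
    rw [inv_zpow, inv_zpow, h1]
  unfold fcas fcos fsin
  rw [h1, h2]

lemma key_id {K : Type*} [Field K] (j x y : K) (hj : j ^ 2 = -1) (h2 : (2:K) ≠ 0)
    (hx : x ≠ 0) (hy : y ≠ 0) :
    (x*y + x⁻¹*y⁻¹)/2 + (x*y - x⁻¹*y⁻¹)/(2*j) =
    ((y + y⁻¹)/2) * ((x + x⁻¹)/2 + (x - x⁻¹)/(2*j))
      + ((y - y⁻¹)/(2*j)) * ((x⁻¹ + x)/2 + (x⁻¹ - x)/(2*j)) := by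
  have hjne : j ≠ 0 := by
    intro h; rw [h, zero_pow two_ne_zero] at hj
    exact (neg_ne_zero.mpr one_ne_zero) hj.symm
  have hjinv : j⁻¹ = -j := by
    field_simp
    linear_combination hj
  have hdiv : ∀ u : K, u / (2 * j) = (-j) * u / 2 := by
    intro u
    rw [div_eq_mul_inv, mul_inv, ← hjinv]; ring
  rw [hdiv, hdiv, hdiv, hdiv]
  field_simp
  linear_combination ((1 - x^2)*(1 - y^2)) * hj

lemma fcas_add {K : Type*} [Field K] (α : Kˣ) (j : K) (hj : j ^ 2 = -1)
    (h2 : (2:K) ≠ 0) (c a b : ℤ) :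
    fcas α j c (a + b) = fcos α c b * fcas α j c a + fsin α j c b * fcas α j c (-a) := by
  have hx : ((α ^ (a*c) : Kˣ) : K) ≠ 0 := Units.ne_zero _
  have hy : ((α ^ (b*c) : Kˣ) : K) ≠ 0 := Units.ne_zero _
  unfold fcas fcos fsin
  rw [show (a+b)*c = a*c + b*c from by ring, show (-a)*c = -(a*c) from by ring]
  simp only [inv_zpow, zpow_add, zpow_neg, Units.val_mul, Units.val_inv_eq_inv_val,
    mul_inv, inv_inv]
  exact key_id j _ _ hj h2 hx hy

/-- H2, time shift: if `v_i = g_{i-d}` (indices mod `N`), then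
`V_k = cos_k(d)·G_k + sin_k(d)·G_{-k}`. -/
theorem ffht_time_shift (p : ℕ) (hp : p.Prime) (hpodd : Odd p)
    (K : Type*) [Field K] [CharP K p] (j : K) (hj : j ^ 2 = -1)
    (α : Kˣ) (N : ℕ) [NeZero N] (hα : orderOf α = N)
    (g G : ZMod N → K) (hG : ∀ k, G k = ffht α j g k) (d : ℤ)
    (v V : ZMod N → K) (hv : ∀ i : ZMod N, v i = g (i - (d : ZMod N)))
    (hV : ∀ k, V k = ffht α j v k) (k : ZMod N) :
    V k = fcos α (k.val : ℤ) d * G k + fsin α j (k.val : ℤ) d * G (-k) := by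
  have h2 : (2 : K) ≠ 0 := by
    have hp2 : p ≠ 2 := by
      rintro rfl
      exact (Nat.not_odd_iff_even.mpr (by norm_num)) hpodd
    have : ((2 : ℕ) : K) ≠ 0 := by
      rw [Ne, CharP.cast_eq_zero_iff K p]
      exact fun h => hp2 ((Nat.prime_dvd_prime_iff_eq hp Nat.prime_two).mp h)
    simpa using this
  rw [hV, hG, hG]
  unfold ffht
  rw [← Equiv.sum_comp (Equiv.addRight ((d : ZMod N)))
    (fun i => v i * fcas α j (k.val : ℤ) (i.val : ℤ))]
  have step : ∀ m : ZMod N,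
      v (Equiv.addRight ((d : ZMod N)) m) *
        fcas α j (k.val : ℤ) (((Equiv.addRight ((d : ZMod N)) m : ZMod N)).val : ℤ)
      = fcos α (k.val : ℤ) d * (g m * fcas α j (k.val : ℤ) (m.val : ℤ))
        + fsin α j (k.val : ℤ) d * (g m * fcas α j ((-k).val : ℤ) (m.val : ℤ)) := by
    intro m
    have hvm : v (m + (d : ZMod N)) = g m := by
      rw [hv]; simp
    have hc1 : fcas α j (k.val : ℤ) ((((m + (d : ZMod N)) : ZMod N).val : ℤ))
        = fcas α j (k.val : ℤ) ((m.val : ℤ) + d) := by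
      apply fcas_congr α j hα
      push_cast [ZMod.natCast_val, ZMod.cast_id, ZMod.intCast_zmod_cast]
      ring
    have hc2 : fcas α j (k.val : ℤ) (-(m.val : ℤ)) = fcas α j ((-k).val : ℤ) (m.val : ℤ) := by
      apply fcas_congr α j hα
      push_cast [ZMod.natCast_val, ZMod.cast_id]
      ring
    show v (m + (d : ZMod N)) * fcas α j (k.val : ℤ) ((((m + (d : ZMod N)) : ZMod N).val : ℤ)) = _
    rw [hvm, hc1, fcas_add α j hj h2, hc2]
    ring
  rw [Finset.sum_congr rfl (fun m _ => step m)]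
  rw [Finset.sum_add_distrib, ← Finset.mul_sum, ← Finset.mul_sum]
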